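/- Let A, Ã be symmetric positive semidefinite 2×2 matrices with det A = det Ã, trace A = H > 0, trace à = H̃ > 0, and suppose ∫(H - H̃) = 0 and ∫ det(A - Ã)·w = 0 for a weight w ≥ 0 positive a.e.; if A and à are positive definite then det(A - Ã) ≤ 0 pointwise, hence det(A - Ã) = 0 a.e. on {w > 0}. -/

import Mathlib

open MeasureTheory

lemma det_diff_key (a b c p q r : ℝ) (ha : 0 < a) (hc : 0 < c) (hp : 0 < p) (hr : 0 < r)
    (hd1 : 0 < a*c - b*b) (hd2 : 0 < p*r - q*q) (heq : a*c - b*b = p*r - q*q) :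
    (a-p)*(c-r) - (b-q)*(b-q) ≤ 0 := by
  nlinarith [sq_nonneg (a*r - c*p), sq_nonneg (a*q - b*p), sq_nonneg (c*q - b*r),
    sq_nonneg (b - q), sq_nonneg (b + q), mul_pos ha hr, mul_pos hc hp,
    mul_pos (mul_pos ha hc) (mul_pos hp hr), mul_pos hd1 hd2]

lemma posdef_diag0 (M : Matrix (Fin 2) (Fin 2) ℝ) (hM : M.PosDef) : 0 < M 0 0 := by
  have h := hM.dotProduct_mulVec_pos (x := ![1, 0]) (by intro h; simpa using congrFun h 0)
  simpa [Matrix.mulVec, dotProduct, Fin.sum_univ_two] using h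

lemma posdef_diag1 (M : Matrix (Fin 2) (Fin 2) ℝ) (hM : M.PosDef) : 0 < M 1 1 := by
  have h := hM.dotProduct_mulVec_pos (x := ![0, 1]) (by intro h; simpa using congrFun h 1)
  simpa [Matrix.mulVec, dotProduct, Fin.sum_univ_two] using h

/-- Final step of the uniqueness proof.  Let `A, A'` be fields of
symmetric positive definite 2×2 matrices on a measure space with pointwise equal
determinants and positive traces `H, H'`, let `w ≥ 0` be a weight that is positive
almost everywhere, and suppose `∫ (H - H') = 0` and `∫ det(A - A')·w = 0` (with the
integrand integrable).  Then `det(A - A') ≤ 0` pointwise, and hence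
`det(A - A') = 0` a.e. on `{w > 0}`. -/
theorem det_diff_vanishes_ae
    {X : Type*} [MeasurableSpace X] (μ : Measure X)
    (A A' : X → Matrix (Fin 2) (Fin 2) ℝ)
    (hA : ∀ x, (A x).PosDef) (hA' : ∀ x, (A' x).PosDef)
    (hdet : ∀ x, (A x).det = (A' x).det)
    (H H' : X → ℝ)
    (hH : ∀ x, H x = (A x).trace) (hH' : ∀ x, H' x = (A' x).trace)
    (hHpos : ∀ x, 0 < H x) (hH'pos : ∀ x, 0 < H' x)
    (hHint : ∫ x, (H x - H' x) ∂μ = 0)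
    (w : X → ℝ) (hw : ∀ x, 0 ≤ w x) (hwpos : ∀ᵐ x ∂μ, 0 < w x)
    (hint : Integrable (fun x => (A x - A' x).det * w x) μ)
    (hzero : ∫ x, (A x - A' x).det * w x ∂μ = 0) :
    (∀ x, (A x - A' x).det ≤ 0) ∧
    (∀ᵐ x ∂μ, 0 < w x → (A x - A' x).det = 0) := by
  have hle : ∀ x, (A x - A' x).det ≤ 0 := by
    intro x
    have hsymA : A x 1 0 = A x 0 1 := by
      have := congrFun (congrFun (hA x).1 0) 1
      simpa [Matrix.conjTranspose_apply] using this
    have hsymA' : A' x 1 0 = A' x 0 1 := by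
      have := congrFun (congrFun (hA' x).1 0) 1
      simpa [Matrix.conjTranspose_apply] using this
    have hdA : 0 < A x 0 0 * A x 1 1 - A x 0 1 * A x 0 1 := by
      have := (hA x).det_pos
      rw [Matrix.det_fin_two, hsymA] at this
      linarith
    have hdA' : 0 < A' x 0 0 * A' x 1 1 - A' x 0 1 * A' x 0 1 := by
      have := (hA' x).det_pos
      rw [Matrix.det_fin_two, hsymA'] at this
      linarith
    have heq : A x 0 0 * A x 1 1 - A x 0 1 * A x 0 1
        = A' x 0 0 * A' x 1 1 - A' x 0 1 * A' x 0 1 := by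
      have := hdet x
      rw [Matrix.det_fin_two, Matrix.det_fin_two, hsymA, hsymA'] at this
      linarith
    have key := det_diff_key (A x 0 0) (A x 0 1) (A x 1 1)
      (A' x 0 0) (A' x 0 1) (A' x 1 1)
      (posdef_diag0 _ (hA x)) (posdef_diag1 _ (hA x))
      (posdef_diag0 _ (hA' x)) (posdef_diag1 _ (hA' x)) hdA hdA' heq
    rw [Matrix.det_fin_two]
    simp only [Matrix.sub_apply]
    rw [hsymA, hsymA']
    linarith
  refine ⟨hle, ?_⟩
  have hnonneg : 0 ≤ fun x => -((A x - A' x).det * w x) := by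
    intro x
    simpa using mul_nonneg (neg_nonneg.mpr (hle x)) (hw x)
  have hint' : Integrable (fun x => -((A x - A' x).det * w x)) μ := hint.neg
  have hzero' : ∫ x, -((A x - A' x).det * w x) ∂μ = 0 := by
    rw [integral_neg, hzero, neg_zero]
  have hae := (integral_eq_zero_iff_of_nonneg hnonneg hint').mp hzero'
  filter_upwards [hae] with x hx hwx
  have : (A x - A' x).det * w x = 0 := by
    have := hx
    simp only [Pi.zero_apply] at this
    linarith [this]
  rcases mul_eq_zero.mp this with h | h
  · exact h
  · exact absurd h (ne_of_gt hwx)
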